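/- Let X be a δ-hyperbolic geodesic metric space and let f ∈ Isom(X) be a hyperbolic isometry with attracting and repelling fixed points A_+ and A_- in ∂X. Fix disjoint neighborhoods U_+ and U_- of A_+ and A_- in X̄ = X ∪ ∂X. Then there exists M ≥ 1 such that for every m ≥ M and every g ∈ Isom(X) with g U_+ ∩ U_- = ∅, the isometry f^m g is hyperbolic. -/

import Mathlib

open Filter Metric Set

noncomputable section

universe u

variable {X : Type u} [MetricSpace X]

/-- The Gromov product `(x·y)_w = ½(d(x,w) + d(w,y) − d(x,y))`. -/
def gromovProduct (w x y : X) : ℝ := (dist x w + dist w y - dist x y) / 2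

/-- `γ` is a geodesic from `x` to `y`, parametrized by arc length on `[0, dist x y]`. -/
structure IsGeodesicSegment (γ : ℝ → X) (x y : X) : Prop where
  source : γ 0 = x
  target : γ (dist x y) = y
  isom : ∀ ⦃s t : ℝ⦄, s ∈ Set.Icc (0 : ℝ) (dist x y) → t ∈ Set.Icc (0 : ℝ) (dist x y) →
    dist (γ s) (γ t) = |s - t|

/-- A geodesic metric space is `δ`-hyperbolic: every pair of points is joined by a
geodesic, every geodesic triangle is `δ`-slim, every geodesic triangle has insize at
most `δ`, and the Gromov product is `δ`-hyperbolic. -/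
structure IsDeltaHyperbolic (X : Type u) [MetricSpace X] (δ : ℝ) : Prop where
  delta_nonneg : 0 ≤ δ
  geodesic : ∀ x y : X, ∃ γ : ℝ → X, IsGeodesicSegment γ x y
  slim : ∀ (x y z : X) (α β γ : ℝ → X),
    IsGeodesicSegment α y z → IsGeodesicSegment β z x → IsGeodesicSegment γ x y →
    ∀ s ∈ Set.Icc (0 : ℝ) (dist y z),
      (∃ t ∈ Set.Icc (0 : ℝ) (dist z x), dist (α s) (β t) ≤ δ) ∨
      (∃ t ∈ Set.Icc (0 : ℝ) (dist x y), dist (α s) (γ t) ≤ δ)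
  insize : ∀ (x y z : X) (α β γ : ℝ → X),
    IsGeodesicSegment α y z → IsGeodesicSegment β z x → IsGeodesicSegment γ x y →
    dist (α (gromovProduct y x z)) (β (gromovProduct z x y)) ≤ δ ∧
    dist (β (gromovProduct z x y)) (γ (gromovProduct x y z)) ≤ δ ∧
    dist (γ (gromovProduct x y z)) (α (gromovProduct y x z)) ≤ δ
  gromov : ∀ w x y z : X,
    min (gromovProduct w x y) (gromovProduct w y z) - δ ≤ gromovProduct w x z

/-- An isometry `f` of `X` is hyperbolic if for every `x ∈ X` there is `t > 0` with
`t|m − n| ≤ d(f^m x, f^n x)` for all integers `m, n`. -/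
def IsHyperbolicIsometry (f : X ≃ᵢ X) : Prop :=
  ∀ x : X, ∃ t : ℝ, 0 < t ∧
    ∀ m n : ℤ, t * |(m : ℝ) - (n : ℝ)| ≤ dist ((f ^ m) x) ((f ^ n) x)

/-- A sequence converges to infinity if the Gromov products `(x_i·x_j)_w → ∞`. -/
def ConvergesToInfinity (w : X) (u : ℕ → X) : Prop :=
  Tendsto (fun p : ℕ × ℕ => gromovProduct w (u p.1) (u p.2)) atTop atTop

/-- Two sequences are equivalent if the mixed Gromov products tend to infinity. -/
def SeqEquiv (w : X) (u v : ℕ → X) : Prop :=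
  Tendsto (fun p : ℕ × ℕ => gromovProduct w (u p.1) (v p.2)) atTop atTop

/-- Sequences converging to infinity. -/
def BoundarySeq (w : X) : Type u := {u : ℕ → X // ConvergesToInfinity w u}

/-- The Gromov boundary `∂X`: equivalence classes of sequences converging to infinity. -/
def GromovBoundary (w : X) : Type u :=
  Quot (fun u v : BoundarySeq w => SeqEquiv w u.1 v.1)

/-- The boundary point determined by a sequence converging to infinity. -/
def boundaryPt (w : X) (u : BoundarySeq w) : GromovBoundary w := Quot.mk _ u

/-- `X̄ = X ∪ ∂X`. -/
def GromovClosure (w : X) : Type u := X ⊕ GromovBoundary w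

theorem gromovProduct_basepoint_ge (w w' x y : X) :
    gromovProduct w x y - dist w w' ≤ gromovProduct w' x y := by
  have h1 : |dist w' x - dist w x| ≤ dist w' w := abs_dist_sub_le w' w x
  have h2 : |dist w' y - dist w y| ≤ dist w' w := abs_dist_sub_le w' w y
  rw [abs_le] at h1 h2
  unfold gromovProduct
  rw [dist_comm x w', dist_comm x w, dist_comm w w']
  linarith [h1.1, h1.2, h2.1, h2.2]

theorem gromovProduct_isometry (f : X ≃ᵢ X) (w x y : X) :
    gromovProduct w (f x) (f y) = gromovProduct (f.symm w) x y := by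
  unfold gromovProduct
  conv_lhs => rw [show w = f (f.symm w) from (f.apply_symm_apply w).symm]
  rw [f.dist_eq, f.dist_eq, f.dist_eq]

theorem convergesToInfinity_isometry {w : X} (f : X ≃ᵢ X) {u : ℕ → X}
    (h : ConvergesToInfinity w u) :
    ConvergesToInfinity w (fun n => f (u n)) := by
  refine tendsto_atTop_mono (fun p => ?_)
    (tendsto_atTop_add_const_right atTop (-dist w (f.symm w)) h)
  have h1 := gromovProduct_basepoint_ge w (f.symm w) (u p.1) (u p.2)
  have h2 := gromovProduct_isometry f w (u p.1) (u p.2)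
  dsimp only
  linarith

theorem seqEquiv_isometry {w : X} (f : X ≃ᵢ X) {u v : ℕ → X}
    (h : SeqEquiv w u v) :
    SeqEquiv w (fun n => f (u n)) (fun n => f (v n)) := by
  refine tendsto_atTop_mono (fun p => ?_)
    (tendsto_atTop_add_const_right atTop (-dist w (f.symm w)) h)
  have h1 := gromovProduct_basepoint_ge w (f.symm w) (u p.1) (v p.2)
  have h2 := gromovProduct_isometry f w (u p.1) (v p.2)
  dsimp only
  linarith

/-- The extension of an isometry of `X` to the Gromov boundary. -/
def boundaryMap (w : X) (f : X ≃ᵢ X) : GromovBoundary w → GromovBoundary w :=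
  Quot.lift
    (fun u : BoundarySeq w =>
      boundaryPt w ⟨fun n => f (u.1 n), convergesToInfinity_isometry f u.2⟩)
    (fun _ _ h => Quot.sound (seqEquiv_isometry f h))

/-- The extension of an isometry of `X` to `X̄ = X ∪ ∂X`. -/
def closureMap (w : X) (f : X ≃ᵢ X) : GromovClosure w → GromovClosure w
  | Sum.inl x => Sum.inl (f x)
  | Sum.inr a => Sum.inr (boundaryMap w f a)

/-- The Gromov product of a boundary point with a point of `X̄`, extended by
taking infima of liminfs over representative sequences. -/
noncomputable def boundaryGP (w : X) (a : GromovBoundary w) : GromovClosure w → ℝ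
  | Sum.inl p => sInf {r : ℝ | ∃ u : BoundarySeq w, boundaryPt w u = a ∧
      r = Filter.liminf (fun n => gromovProduct w (u.1 n) p) atTop}
  | Sum.inr b => sInf {r : ℝ | ∃ u v : BoundarySeq w, boundaryPt w u = a ∧
      boundaryPt w v = b ∧
      r = Filter.liminf (fun n => gromovProduct w (u.1 n) (v.1 n)) atTop}

/-- The basis for the topology on `X̄`: open balls in `X`, and the sets
`N(â,k) = {y : (â·y)_w > k}` for boundary points `â` and `k > 0`. -/
def closureBasis (w : X) : Set (Set (GromovClosure w)) :=
  {S | (∃ (x : X) (r : ℝ), 0 < r ∧ S = Sum.inl '' Metric.ball x r) ∨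
       (∃ (a : GromovBoundary w) (k : ℝ), 0 < k ∧ S = {y | k < boundaryGP w a y})}

/-- The topology on `X̄` generated by the basis above. -/
def closureTop (w : X) : TopologicalSpace (GromovClosure w) :=
  TopologicalSpace.generateFrom (closureBasis w)

/-- `S ⊆ X̄` is a neighborhood of `p ∈ X̄`. -/
def IsNeighborhood (w : X) (S : Set (GromovClosure w)) (p : GromovClosure w) : Prop :=
  S ∈ @nhds (GromovClosure w) (closureTop w) p

/-- `a ∈ ∂X` is the attracting fixed point of `f`: it is represented by the
sequence `(f^n x)` for a point `x ∈ X`. -/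
def IsAttractingFixedPt (w : X) (f : X ≃ᵢ X) (a : GromovBoundary w) : Prop :=
  ∃ (x : X) (h : ConvergesToInfinity w (fun n : ℕ => (f ^ (n : ℤ)) x)),
    boundaryPt w ⟨fun n : ℕ => (f ^ (n : ℤ)) x, h⟩ = a

/-- `a ∈ ∂X` is the repelling fixed point of `f`: the attracting fixed point of `f⁻¹`. -/
def IsRepellingFixedPt (w : X) (f : X ≃ᵢ X) (a : GromovBoundary w) : Prop :=
  IsAttractingFixedPt w f⁻¹ a

/-- The concatenation `α · (f α)` of a path `α` defined on `[0, L]` with its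
image under `f`, parametrized on `[0, 2L]`. -/
noncomputable def concatPath (f : X ≃ᵢ X) (α : ℝ → X) (L : ℝ) : ℝ → X :=
  fun s => if s ≤ L then α s else f (α (s - L))

/-! ### Auxiliary lemmas for the main theorem -/

section Aux

variable {X : Type u} [MetricSpace X]

lemma gp_nonneg (w x y : X) : 0 ≤ gromovProduct w x y := by
  have := dist_triangle x w y
  unfold gromovProduct; linarith

lemma gp_symm (w x y : X) : gromovProduct w x y = gromovProduct w y x := by
  unfold gromovProduct
  rw [dist_comm x w, dist_comm w y, dist_comm x y]; ring

lemma gp_le_dist (w x y : X) : gromovProduct w x y ≤ dist w y := by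
  have := dist_triangle x w y
  have := abs_dist_sub_le x y w
  rw [abs_le] at this
  unfold gromovProduct
  have h1 : dist x w - dist x y ≤ dist w y := by
    have := dist_triangle x y w
    rw [dist_comm w y] at *
    linarith [dist_comm x w ▸ this]
  linarith

lemma gp_lipschitz_left (w x x' y : X) :
    gromovProduct w x y - dist x x' ≤ gromovProduct w x' y := by
  have h1 : dist x' w ≥ dist x w - dist x x' := by
    have := dist_triangle x x' w; linarith
  have h2 : dist x' y ≤ dist x x' + dist x y := by
    have := dist_triangle x' x y; rw [dist_comm x' x] at this; linarith
  unfold gromovProduct; linarith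

lemma gp_lipschitz_right (w x y y' : X) :
    gromovProduct w x y - dist y y' ≤ gromovProduct w x y' := by
  rw [gp_symm w x y, gp_symm w x y']
  exact gp_lipschitz_left w y y' x

lemma gp_self (w x : X) : gromovProduct w x x = dist x w := by
  unfold gromovProduct; rw [dist_comm w x]; simp

lemma gp_isom (e : X ≃ᵢ X) (w x y : X) :
    gromovProduct (e w) (e x) (e y) = gromovProduct w x y := by
  unfold gromovProduct
  rw [e.dist_eq, e.dist_eq, e.dist_eq]

/-- the fundamental two-basepoint identity `(x·z)_y + (x·y)_z = d(y,z)`. -/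
lemma gp_add (x y z : X) : gromovProduct y x z + gromovProduct z x y = dist y z := by
  unfold gromovProduct
  rw [dist_comm z y]
  ring

end Aux
section Aux2

variable {X : Type u} [MetricSpace X]

/-- Joint bigness of Gromov products of two sequences. -/
def JB (w : X) (u v : ℕ → X) : Prop :=
  ∀ C : ℝ, ∃ N : ℕ, ∀ i, N ≤ i → ∀ j, N ≤ j → C ≤ gromovProduct w (u i) (v j)

lemma pair_tendsto_iff_JB {w : X} {u v : ℕ → X} :
    Tendsto (fun p : ℕ × ℕ => gromovProduct w (u p.1) (v p.2)) atTop atTop ↔ JB w u v := by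
  rw [Filter.tendsto_atTop]
  constructor
  · intro h C
    obtain ⟨a, ha⟩ := eventually_atTop.mp (h C)
    exact ⟨max a.1 a.2, fun i hi j hj =>
      ha (i, j) ⟨le_trans (le_max_left _ _) hi, le_trans (le_max_right _ _) hj⟩⟩
  · intro h C
    obtain ⟨N, hN⟩ := h C
    rw [eventually_atTop]
    exact ⟨(N, N), fun b hb => hN b.1 hb.1 b.2 hb.2⟩

lemma convergesToInfinity_iff_JB {w : X} {u : ℕ → X} :
    ConvergesToInfinity w u ↔ JB w u u := pair_tendsto_iff_JB

lemma seqEquiv_iff_JB {w : X} {u v : ℕ → X} :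
    SeqEquiv w u v ↔ JB w u v := pair_tendsto_iff_JB

lemma JB.symm {w : X} {u v : ℕ → X} (h : JB w u v) : JB w v u := by
  intro C
  obtain ⟨N, hN⟩ := h C
  exact ⟨N, fun i hi j hj => (gp_symm w (u j) (v i)) ▸ hN j hj i hi⟩

variable {δ : ℝ}

/-- The four point inequality, in convenient form. -/
lemma gp_min_le (hg : ∀ w x y z : X, min (gromovProduct w x y) (gromovProduct w y z) - δ
      ≤ gromovProduct w x z)
    {C : ℝ} (w x y z : X) (h1 : C + δ ≤ gromovProduct w x y) (h2 : C + δ ≤ gromovProduct w y z) :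
    C ≤ gromovProduct w x z := by
  have h := hg w x y z
  have := le_min h1 h2
  linarith

lemma JB.trans (hg : ∀ w x y z : X, min (gromovProduct w x y) (gromovProduct w y z) - δ
      ≤ gromovProduct w x z)
    {w : X} {u v z : ℕ → X} (h1 : JB w u v) (h2 : JB w v z) : JB w u z := by
  intro C
  obtain ⟨N1, hN1⟩ := h1 (C + δ)
  obtain ⟨N2, hN2⟩ := h2 (C + δ)
  refine ⟨max N1 N2, fun i hi j hj => ?_⟩
  exact gp_min_le hg w (u i) (v (max N1 N2)) (z j)
    (hN1 i (le_trans (le_max_left _ _) hi) _ (le_max_left _ _))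
    (hN2 _ (le_max_right _ _) j (le_trans (le_max_right _ _) hj))

lemma JB.self_left (hg : ∀ w x y z : X, min (gromovProduct w x y) (gromovProduct w y z) - δ
      ≤ gromovProduct w x z)
    {w : X} {u v : ℕ → X} (h : JB w u v) : JB w u u :=
  JB.trans hg h h.symm

/-- Lipschitz transfer of joint bigness. -/
lemma JB.of_close {w : X} {u v u' v' : ℕ → X} (h : JB w u v)
    {c : ℝ} (hu : ∀ n, dist (u n) (u' n) ≤ c) (hv : ∀ n, dist (v n) (v' n) ≤ c) :
    JB w u' v' := by
  intro C
  obtain ⟨N, hN⟩ := h (C + c + c)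
  refine ⟨N, fun i hi j hj => ?_⟩
  have l1 := gp_lipschitz_left w (u i) (u' i) (v j)
  have l2 := gp_lipschitz_right w (u' i) (v j) (v' j)
  have := hN i hi j hj
  have := hu i
  have := hv j
  linarith

/-- Any two representative sequences of the same boundary point are equivalent. -/
lemma seqEquiv_of_boundaryPt_eq
    (hg : ∀ w x y z : X, min (gromovProduct w x y) (gromovProduct w y z) - δ
      ≤ gromovProduct w x z)
    {w : X} {u v : BoundarySeq w} (h : boundaryPt w u = boundaryPt w v) :
    SeqEquiv w u.1 v.1 := by
  have hequiv : Equivalence (fun u v : BoundarySeq w => SeqEquiv w u.1 v.1) := by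
    constructor
    · intro x
      exact x.2
    · intro x y hxy
      rw [seqEquiv_iff_JB] at *
      exact hxy.symm
    · intro x y z hxy hyz
      rw [seqEquiv_iff_JB] at *
      exact hxy.trans hg hyz
  exact (Equivalence.eqvGen_iff hequiv).mp (Quot.eq.mp h)

end Aux2
section Aux3

variable {X : Type u} [MetricSpace X]

lemma liminf_nonneg {f : ℕ → ℝ} (h : ∀ n, 0 ≤ f n) : 0 ≤ Filter.liminf f atTop := by
  rw [Filter.liminf_eq]
  by_cases hb : BddAbove {a | ∀ᶠ n in atTop, a ≤ f n}
  · exact le_csSup hb (by filter_upwards with n using h n)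
  · rw [Real.sSup_of_not_bddAbove hb]

lemma liminf_le_of_le {f : ℕ → ℝ} {a : ℝ} (ha : 0 ≤ a) (h : ∀ n, f n ≤ a) :
    Filter.liminf f atTop ≤ a := by
  rw [Filter.liminf_eq]
  refine Real.sSup_le (fun x hx => ?_) ha
  obtain ⟨n, hn⟩ := (hx.and (Filter.eventually_atTop.mpr ⟨0, fun b _ => h b⟩)).exists
  linarith [hn.1, hn.2]

variable (w : X)

/-- Elements of the defining set of `boundaryGP` at an interior point are nonnegative. -/
lemma bgp_inl_bddBelow (a : GromovBoundary w) (p : X) :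
    ∀ r ∈ {r : ℝ | ∃ u : BoundarySeq w, boundaryPt w u = a ∧
      r = Filter.liminf (fun n => gromovProduct w (u.1 n) p) atTop}, (0:ℝ) ≤ r := by
  rintro r ⟨u, -, rfl⟩
  exact liminf_nonneg (fun n => gp_nonneg _ _ _)

lemma bgp_inr_bddBelow (a b : GromovBoundary w) :
    ∀ r ∈ {r : ℝ | ∃ u v : BoundarySeq w, boundaryPt w u = a ∧ boundaryPt w v = b ∧
      r = Filter.liminf (fun n => gromovProduct w (u.1 n) (v.1 n)) atTop}, (0:ℝ) ≤ r := by
  rintro r ⟨u, v, -, -, rfl⟩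
  exact liminf_nonneg (fun n => gp_nonneg _ _ _)

/-- `boundaryGP` at a pair of boundary points is at most the liminf along any
pair of representatives. -/
lemma bgp_inr_le (a b : GromovBoundary w) (u v : BoundarySeq w)
    (hu : boundaryPt w u = a) (hv : boundaryPt w v = b) :
    boundaryGP w a (Sum.inr b) ≤
      Filter.liminf (fun n => gromovProduct w (u.1 n) (v.1 n)) atTop := by
  show sInf _ ≤ _
  exact csInf_le ⟨0, bgp_inr_bddBelow w a b⟩ ⟨u, v, hu, hv, rfl⟩

/-- If `boundaryGP` at an interior point is `< a` then some representative has
small liminf. -/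
lemma bgp_inl_lt (b : GromovBoundary w) (p : X) {a : ℝ}
    (h : boundaryGP w b (Sum.inl p) < a) :
    ∃ u : BoundarySeq w, boundaryPt w u = b ∧
      Filter.liminf (fun n => gromovProduct w (u.1 n) p) atTop < a := by
  have hne : {r : ℝ | ∃ u : BoundarySeq w, boundaryPt w u = b ∧
      r = Filter.liminf (fun n => gromovProduct w (u.1 n) p) atTop}.Nonempty := by
    obtain ⟨u, hu⟩ := Quot.exists_rep b
    exact ⟨_, u, hu, rfl⟩
  have := (csInf_lt_iff ⟨0, bgp_inl_bddBelow w b p⟩ hne).mp h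
  obtain ⟨r, ⟨u, hu, rfl⟩, hr⟩ := this
  exact ⟨u, hu, hr⟩

end Aux3
section Aux4

variable {X : Type u} [MetricSpace X] {δ : ℝ}

/-- **Key tail lemma**: if `(b·a)_w > k` (in the `sInf` sense), then for any
representative sequence `v` of `a`, eventually `(b · v n)_w > k`. -/
lemma exists_boundary_rep {w : X} (b : GromovBoundary w) :
    ∃ u : BoundarySeq w, boundaryPt w u = b :=
  Quot.exists_rep b

lemma boundaryPt_eq_of_seqEquiv {w : X} {u v : BoundarySeq w} (h : SeqEquiv w u.1 v.1) :
    boundaryPt w u = boundaryPt w v :=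
  Quot.sound h

lemma tail_mem
    (hg : ∀ w x y z : X, min (gromovProduct w x y) (gromovProduct w y z) - δ
      ≤ gromovProduct w x z)
    {w : X} (b aa : GromovBoundary w) (v : BoundarySeq w)
    (hv : boundaryPt w v = aa) {k : ℝ} (hk : 0 ≤ k)
    (h : k < boundaryGP w b (Sum.inr aa)) :
    ∀ᶠ n in atTop, k < boundaryGP w b (Sum.inl (v.1 n)) := by
  by_contra hcon
  rw [Filter.not_eventually] at hcon
  obtain ⟨φ, hφmono, hφ⟩ := Filter.extraction_of_frequently_atTop
    (hcon.mono (fun n hn => not_lt.mp hn))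
  set S₀ := boundaryGP w b (Sum.inr aa) with hS₀def
  set k' := (k + S₀) / 2 with hk'def
  have hkk' : k < k' := by simp only [hk'def]; linarith
  have hk'S : k' < S₀ := by simp only [hk'def]; linarith
  have hk'0 : 0 ≤ k' := by simp only [hk'def]; linarith
  -- choose bad representatives
  have hsel : ∀ r : ℕ, ∃ u : BoundarySeq w, boundaryPt w u = b ∧
      Filter.liminf (fun n => gromovProduct w (u.1 n) (v.1 (φ r))) atTop < k' := by
    intro r
    exact bgp_inl_lt w b _ (lt_of_le_of_lt (hφ r) hkk')
  choose U hUb hUlim using hsel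
  obtain ⟨u0, hu0b⟩ := exists_boundary_rep b
  -- joint bigness of each bad representative with the fixed one
  have JBr : ∀ r, JB w (U r).1 u0.1 := fun r =>
    seqEquiv_iff_JB.mp (seqEquiv_of_boundaryPt_eq hg ((hUb r).trans hu0b.symm))
  choose T hT using fun r => JBr r (r : ℝ)
  -- choose the diagonal times
  have hfreq : ∀ r : ℕ, ∃ t, T r ≤ t ∧
      gromovProduct w ((U r).1 t) (v.1 (φ r)) < k' := by
    intro r
    have hbdd : Filter.IsBoundedUnder (· ≤ ·) atTop
        (fun n => gromovProduct w ((U r).1 n) (v.1 (φ r))) :=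
      Filter.isBoundedUnder_of ⟨dist w (v.1 (φ r)), fun n => gp_le_dist _ _ _⟩
    have := Filter.frequently_lt_of_liminf_lt hbdd.isCoboundedUnder_ge (hUlim r)
    obtain ⟨t, ht1, ht2⟩ := Filter.frequently_atTop.mp this (T r)
    exact ⟨t, ht1, ht2⟩
  choose t ht1 ht2 using hfreq
  set u' : ℕ → X := fun r => (U r).1 (t r) with hu'def
  -- u' is a representative of b
  have c1 : JB w u' u0.1 := by
    intro C
    obtain ⟨N0, hN0⟩ := (convergesToInfinity_iff_JB.mp u0.2) (C + δ)
    refine ⟨max N0 ⌈max 0 (C + δ)⌉₊, fun i hi j hj => ?_⟩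
    set M := max (T i) N0 with hMdef
    have hiC : C + δ ≤ (i : ℝ) := by
      have h1 : ⌈max 0 (C + δ)⌉₊ ≤ i := le_trans (le_max_right _ _) hi
      exact le_trans (le_max_right 0 (C + δ)) (Nat.ceil_le.mp h1)
    have h1 : C + δ ≤ gromovProduct w (u' i) (u0.1 M) :=
      le_trans hiC (hT i (t i) (ht1 i) M (le_max_left _ _))
    have h2 : C + δ ≤ gromovProduct w (u0.1 M) (u0.1 j) :=
      hN0 M (le_max_right _ _) j (le_trans (le_max_left _ _) hj)
    exact gp_min_le hg w _ _ _ h1 h2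
  have c2 : ConvergesToInfinity w u' := convergesToInfinity_iff_JB.mpr (c1.self_left hg)
  have c3 : boundaryPt w ⟨u', c2⟩ = b := by
    have hse : SeqEquiv w u' u0.1 := seqEquiv_iff_JB.mpr c1
    exact (boundaryPt_eq_of_seqEquiv (u := ⟨u', c2⟩) (v := u0) hse).trans hu0b
  -- the subsequence of v is a representative of aa
  set v' : ℕ → X := fun r => v.1 (φ r) with hv'def
  have hvJB := convergesToInfinity_iff_JB.mp v.2
  have c4 : JB w v' v.1 := by
    intro C
    obtain ⟨N, hN⟩ := hvJB C
    exact ⟨N, fun i hi j hj => hN (φ i) (le_trans hi (hφmono.le_apply)) j hj⟩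
  have c5 : ConvergesToInfinity w v' := convergesToInfinity_iff_JB.mpr (c4.self_left hg)
  have c6 : boundaryPt w ⟨v', c5⟩ = aa := by
    have hse : SeqEquiv w v' v.1 := seqEquiv_iff_JB.mpr c4
    exact (boundaryPt_eq_of_seqEquiv (u := ⟨v', c5⟩) (v := v) hse).trans hv
  -- contradiction
  have hle : S₀ ≤ Filter.liminf (fun r => gromovProduct w (u' r) (v' r)) atTop :=
    bgp_inr_le w b aa ⟨u', c2⟩ ⟨v', c5⟩ c3 c6
  have hge : Filter.liminf (fun r => gromovProduct w (u' r) (v' r)) atTop ≤ k' :=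
    liminf_le_of_le hk'0 (fun r => le_of_lt (ht2 r))
  linarith

end Aux4
section Aux5

variable {X : Type u} [MetricSpace X] {δ : ℝ}

lemma pow_succ_apply (h : X ≃ᵢ X) (n : ℕ) (x : X) : (h ^ (n + 1)) x = (h ^ n) (h x) := by
  rw [pow_succ]; rfl

/-- If `d(h²w, w) ≥ d(hw, w) + 2δ + 1` then `h` is a hyperbolic isometry. -/
lemma criterion (hδ0 : 0 ≤ δ)
    (hg : ∀ w x y z : X, min (gromovProduct w x y) (gromovProduct w y z) - δ
      ≤ gromovProduct w x z)
    (h : X ≃ᵢ X) (w : X)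
    (key : dist (h w) w + 2 * δ + 1 ≤ dist (h (h w)) w) :
    IsHyperbolicIsometry h := by
  set L := dist (h w) w with hLdef
  set a := gromovProduct (h w) w (h (h w)) with hadef
  have ha0 : 0 ≤ a := gp_nonneg _ _ _
  have hdist_step : ∀ n : ℕ, dist ((h ^ n) w) ((h ^ (n + 1)) w) = L := by
    intro n
    rw [pow_succ_apply, (h ^ n).dist_eq, dist_comm]
  have h2a : 2 * a ≤ L - 2 * δ - 1 := by
    have ha : a = (dist w (h w) + dist (h w) (h (h w)) - dist w (h (h w))) / 2 := rfl
    have h1 : dist (h w) (h (h w)) = dist w (h w) := h.dist_eq w (h w)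
    have h2 : dist w (h w) = L := dist_comm w (h w) ▸ rfl
    have h3 : dist w (h (h w)) = dist (h (h w)) w := dist_comm _ _
    linarith [key]
  have hL1 : 1 ≤ L := by linarith
  set c : ℕ → ℝ := fun n => gromovProduct ((h ^ (n + 1)) w) w ((h ^ (n + 2)) w) with hcdef
  have hpow2 : ∀ n : ℕ, (h ^ (n + 2)) w = (h ^ n) (h (h w)) := by
    intro n
    rw [show n + 2 = (n + 1) + 1 by ring, pow_succ_apply, pow_succ_apply]
  have ha_shift : ∀ n : ℕ,
      gromovProduct ((h ^ (n + 1)) w) ((h ^ n) w) ((h ^ (n + 2)) w) = a := by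
    intro n
    rw [hpow2, pow_succ_apply]
    exact gp_isom (h ^ n) (h w) w (h (h w))
  have hc0 : c 0 = a := by
    simp only [hcdef]
    rw [hpow2, pow_one, pow_zero]
    rfl
  have hcind : ∀ n, c n ≤ a + δ := by
    intro n
    induction n with
    | zero => rw [hc0]; linarith
    | succ n ih =>
      by_contra hcon
      push_neg at hcon
      have hkey := hg ((h ^ (n + 2)) w) ((h ^ (n + 1)) w) w ((h ^ (n + 3)) w)
      have e1 : gromovProduct ((h ^ (n + 2)) w) ((h ^ (n + 1)) w) w
          = L - c n := by
        have hadd := gp_add w ((h ^ (n + 2)) w) ((h ^ (n + 1)) w)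
        have hsym := gp_symm ((h ^ (n + 2)) w) ((h ^ (n + 1)) w) w
        have hds : dist ((h ^ (n + 2)) w) ((h ^ (n + 1)) w) = L := by
          rw [dist_comm]; exact hdist_step (n + 1)
      -- hadd : gp_{x(n+2)}(w, x(n+1)) + gp_{x(n+1)}(w, x(n+2)) = dist x(n+2) x(n+1)
        have : gromovProduct ((h ^ (n + 1)) w) w ((h ^ (n + 2)) w) = c n := rfl
        linarith [hadd, hsym, hds, this]
      have e2 : gromovProduct ((h ^ (n + 2)) w) ((h ^ (n + 1)) w) ((h ^ (n + 3)) w) = a := by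
        have := ha_shift (n + 1)
        rw [show n + 1 + 1 = n + 2 by ring, show n + 1 + 2 = n + 3 by ring] at this
        exact this
      have e3 : gromovProduct ((h ^ (n + 2)) w) w ((h ^ (n + 3)) w) = c (n + 1) := rfl
      rw [e1, e2, e3] at hkey
      have hmin : a + δ < min (L - c n) (c (n + 1)) := lt_min (by linarith) hcon
      linarith [hkey, hmin]
  have hd : ∀ n : ℕ, (n : ℝ) + 1 ≤ dist ((h ^ (n + 1)) w) w := by
    intro n
    induction n with
    | zero =>
      have : (h ^ 1) w = h w := by rw [pow_one]
      rw [this]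
      simpa using hL1
    | succ n ih =>
      have hcn : c n = (dist w ((h ^ (n + 1)) w) + dist ((h ^ (n + 1)) w) ((h ^ (n + 2)) w)
          - dist w ((h ^ (n + 2)) w)) / 2 := rfl
      have h1 := hdist_step (n + 1)
      have h2 := hcind n
      have h3 : dist w ((h ^ (n + 1)) w) = dist ((h ^ (n + 1)) w) w := dist_comm _ _
      have h4 : dist w ((h ^ (n + 2)) w) = dist ((h ^ (n + 2)) w) w := dist_comm _ _
      push_cast
      rw [show n + 1 + 1 = n + 2 by ring] at *
      linarith
  -- integer version
  have hzsym : ∀ k : ℤ, dist ((h ^ (-k)) w) w = dist ((h ^ k) w) w := by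
    intro k
    have e : (h ^ k) ((h ^ (-k)) w) = w := by
      rw [← IsometryEquiv.mul_apply, ← zpow_add]
      simp
    calc dist ((h ^ (-k)) w) w = dist ((h ^ k) ((h ^ (-k)) w)) ((h ^ k) w) :=
          ((h ^ k).dist_eq _ _).symm
      _ = dist w ((h ^ k) w) := by rw [e]
      _ = dist ((h ^ k) w) w := dist_comm _ _
  have hz : ∀ k : ℤ, |(k : ℝ)| ≤ dist ((h ^ k) w) w := by
    have hznn : ∀ k : ℤ, 0 ≤ k → |(k : ℝ)| ≤ dist ((h ^ k) w) w := by
      intro k hk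
      obtain ⟨n, rfl⟩ := Int.eq_ofNat_of_zero_le hk
      rw [abs_of_nonneg (by positivity : (0:ℝ) ≤ ((n:ℤ):ℝ))]
      cases n with
      | zero => simp
      | succ n =>
        have := hd n
        rw [zpow_natCast]
        push_cast
        push_cast at this
        linarith
    intro k
    rcases le_or_gt 0 k with hk | hk
    · exact hznn k hk
    · have h1 := hznn (-k) (by omega)
      rw [hzsym k] at h1
      calc |(k:ℝ)| = |((-k : ℤ) : ℝ)| := by push_cast; rw [abs_neg]
        _ ≤ _ := h1
  have hzsymP : ∀ (q : X) (k : ℤ), dist ((h ^ (-k)) q) q = dist ((h ^ k) q) q := by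
    intro q k
    have e : (h ^ k) ((h ^ (-k)) q) = q := by
      rw [← IsometryEquiv.mul_apply, ← zpow_add]
      simp
    calc dist ((h ^ (-k)) q) q = dist ((h ^ k) ((h ^ (-k)) q)) ((h ^ k) q) :=
          ((h ^ k).dist_eq _ _).symm
      _ = dist q ((h ^ k) q) := by rw [e]
      _ = dist ((h ^ k) q) q := dist_comm _ _
  intro p
  set R := dist p w with hRdef
  have hlow : ∀ k : ℤ, |(k : ℝ)| - 2 * R ≤ dist ((h ^ k) p) p := by
    intro k
    have t1 := dist_triangle ((h ^ k) w) ((h ^ k) p) w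
    have t2 := dist_triangle ((h ^ k) p) p w
    have e : dist ((h ^ k) w) ((h ^ k) p) = dist w p := (h ^ k).dist_eq w p
    have hzk := hz k
    have hcw : dist w p = R := dist_comm w p
    linarith
  have hpos : ∀ k : ℤ, k ≠ 0 → 0 < dist ((h ^ k) p) p := by
    intro k hk
    by_contra hc
    push_neg at hc
    have hfix : (h ^ k) p = p := dist_eq_zero.mp (le_antisymm hc dist_nonneg)
    have hiter : ∀ j : ℕ, (h ^ (k * (j : ℤ))) p = p := by
      intro j
      induction j with
      | zero => simp
      | succ j ih =>
        have he : k * ((j : ℤ) + 1) = k * (j : ℤ) + k := by ring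
        push_cast
        rw [he, zpow_add, IsometryEquiv.mul_apply, hfix]
        push_cast at ih
        exact ih
    set j : ℕ := ⌈2 * R⌉₊ + 1 with hjdef
    have hj : 2 * R < (j : ℝ) := by
      have h1 := Nat.le_ceil (2 * R)
      have h2 : (⌈2 * R⌉₊ : ℝ) < (j : ℝ) := by exact_mod_cast Nat.lt_succ_self _
      linarith
    have h1 := hlow (k * (j : ℤ))
    rw [hiter j, dist_self] at h1
    have habs : (j : ℝ) ≤ |((k * (j : ℤ) : ℤ) : ℝ)| := by
      push_cast
      rw [abs_mul]
      have hk1 : (1 : ℝ) ≤ |(k : ℝ)| := by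
        have : (1 : ℤ) ≤ |k| := Int.one_le_abs hk
        calc (1:ℝ) = ((1:ℤ):ℝ) := by norm_num
          _ ≤ ((|k|:ℤ):ℝ) := by exact_mod_cast this
          _ = |(k:ℝ)| := by push_cast; ring
      have hjnn : (0:ℝ) ≤ (j:ℝ) := by positivity
      have : |((j:ℤ):ℝ)| = ((j:ℤ):ℝ) := abs_of_nonneg (by positivity)
      push_cast at this ⊢
      nlinarith
    linarith
  set K : ℕ := ⌈4 * R⌉₊ + 1 with hKdef
  have hK1 : 1 ≤ K := Nat.le_add_left 1 _
  have hKR : 4 * R ≤ (K : ℝ) := by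
    have h1 := Nat.le_ceil (4 * R)
    have h2 : (⌈4 * R⌉₊ : ℝ) ≤ (K : ℝ) := by exact_mod_cast Nat.le_succ _
    linarith
  have hne : (Finset.Icc 1 K).Nonempty := ⟨1, Finset.mem_Icc.mpr ⟨le_rfl, hK1⟩⟩
  set t0 := (Finset.Icc 1 K).inf' hne (fun k => dist ((h ^ (k : ℤ)) p) p / (k : ℝ)) with ht0
  have ht0pos : 0 < t0 := by
    rw [ht0, Finset.lt_inf'_iff]
    intro i hi
    have hi1 : 1 ≤ i := (Finset.mem_Icc.mp hi).1
    have hi0 : i ≠ 0 := by omega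
    exact div_pos (hpos i (Int.natCast_ne_zero.mpr hi0)) (by positivity)
  refine ⟨min (1/2) t0, lt_min (by norm_num) ht0pos, ?_⟩
  intro m n
  set k := m - n with hkdef
  have hdeq : dist ((h ^ m) p) ((h ^ n) p) = dist ((h ^ k) p) p := by
    have he : (h ^ m) p = (h ^ n) ((h ^ k) p) := by
      rw [← IsometryEquiv.mul_apply, ← zpow_add]
      have : m = n + k := by rw [hkdef]; ring
      rw [← this]
    rw [he, (h ^ n).dist_eq]
  have hcast : |(m : ℝ) - (n : ℝ)| = |((k : ℤ) : ℝ)| := by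
    congr 1
    rw [hkdef]
    push_cast
    ring
  rcases eq_or_ne k 0 with hk0 | hk0
  · rw [hcast, hk0]
    simp [dist_nonneg]
  have habsnat : |((k : ℤ) : ℝ)| = (k.natAbs : ℝ) :=
    (Int.cast_abs (a := k)).symm.trans (Nat.cast_natAbs (n := k)).symm
  rcases le_or_gt (k.natAbs) K with hsmall | hbig
  · have hmem : k.natAbs ∈ Finset.Icc 1 K := Finset.mem_Icc.mpr ⟨by omega, hsmall⟩
    have hinf : t0 ≤ dist ((h ^ ((k.natAbs : ℕ) : ℤ)) p) p / (k.natAbs : ℝ) :=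
      Finset.inf'_le _ hmem
    have hsymval : dist ((h ^ ((k.natAbs : ℕ) : ℤ)) p) p = dist ((h ^ k) p) p := by
      rcases Int.natAbs_eq k with he | he
      · rw [← he]
      · calc dist ((h ^ ((k.natAbs : ℕ) : ℤ)) p) p
            = dist ((h ^ (-((k.natAbs : ℕ) : ℤ))) p) p := (hzsymP p _).symm
          _ = dist ((h ^ k) p) p := by rw [← he]
    rw [hsymval] at hinf
    have hnpos : (0 : ℝ) < (k.natAbs : ℝ) := by
      have : k.natAbs ≠ 0 := Int.natAbs_ne_zero.mpr hk0
      positivity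
    have hmul : t0 * (k.natAbs : ℝ) ≤ dist ((h ^ k) p) p := by
      rw [← le_div_iff₀ hnpos]
      exact hinf
    rw [hdeq, hcast, habsnat]
    calc min (1/2) t0 * (k.natAbs : ℝ) ≤ t0 * (k.natAbs : ℝ) :=
          mul_le_mul_of_nonneg_right (min_le_right _ _) (le_of_lt hnpos)
      _ ≤ _ := hmul
  · have h1 := hlow k
    have hKabs : (K : ℝ) ≤ |((k : ℤ) : ℝ)| := by
      rw [habsnat]
      exact_mod_cast le_of_lt hbig
    rw [hdeq, hcast]
    have habnn : (0:ℝ) ≤ |((k : ℤ) : ℝ)| := abs_nonneg _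
    have hh : min (1/2) t0 * |((k : ℤ) : ℝ)| ≤ (1/2) * |((k : ℤ) : ℝ)| :=
      mul_le_mul_of_nonneg_right (min_le_left _ _) habnn
    linarith

end Aux5
section Aux6

variable {X : Type u} [MetricSpace X]

lemma generateOpen_extract {w : X} {A : GromovBoundary w} {O : Set (GromovClosure w)}
    (hO : TopologicalSpace.GenerateOpen (closureBasis w) O) (hA : Sum.inr A ∈ O) :
    ∃ L : List (GromovBoundary w × ℝ),
      (∀ q ∈ L, 0 < q.2 ∧ q.2 < boundaryGP w q.1 (Sum.inr A)) ∧
      ∀ y, (∀ q ∈ L, q.2 < boundaryGP w q.1 y) → y ∈ O := by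
  revert hA
  induction hO with
  | basic S hS =>
    rcases hS with ⟨x, r, hr, rfl⟩ | ⟨a, k, hk, rfl⟩
    · intro hA
      exfalso
      obtain ⟨x', -, hx'⟩ := hA
      exact Sum.inl_ne_inr hx'
    · intro hA
      refine ⟨[(a, k)], ?_, ?_⟩
      · intro q hq
        rw [List.mem_singleton] at hq
        subst hq
        exact ⟨hk, hA⟩
      · intro y hy
        exact hy (a, k) (List.mem_singleton_self _)
  | univ =>
    intro _
    exact ⟨[], by simp, fun y _ => trivial⟩
  | inter s t hs ht IHs IHt =>
    intro hA
    obtain ⟨Ls, hLs1, hLs2⟩ := IHs hA.1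
    obtain ⟨Lt, hLt1, hLt2⟩ := IHt hA.2
    refine ⟨Ls ++ Lt, ?_, ?_⟩
    · intro q hq
      rcases List.mem_append.mp hq with hq | hq
      exacts [hLs1 q hq, hLt1 q hq]
    · intro y hy
      exact ⟨hLs2 y (fun q hq => hy q (List.mem_append_left _ hq)),
        hLt2 y (fun q hq => hy q (List.mem_append_right _ hq))⟩
  | sUnion S hS IH =>
    intro hA
    obtain ⟨s, hsS, hAs⟩ := hA
    obtain ⟨L, h1, h2⟩ := IH s hsS hAs
    exact ⟨L, h1, fun y hy => ⟨s, hsS, h2 y hy⟩⟩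

lemma neighborhood_extract {w : X} {A : GromovBoundary w} {S : Set (GromovClosure w)}
    (h : IsNeighborhood w S (Sum.inr A)) :
    ∃ L : List (GromovBoundary w × ℝ),
      (∀ q ∈ L, 0 < q.2 ∧ q.2 < boundaryGP w q.1 (Sum.inr A)) ∧
      ∀ y, (∀ q ∈ L, q.2 < boundaryGP w q.1 y) → y ∈ S := by
  unfold IsNeighborhood at h
  replace h := (@_root_.mem_nhds_iff _ (closureTop w) _ _).mp h
  obtain ⟨t, hts, hto, hat⟩ := h
  obtain ⟨L, h1, h2⟩ := generateOpen_extract (hto : TopologicalSpace.GenerateOpen _ t) hat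
  exact ⟨L, h1, fun y hy => hts (h2 y hy)⟩

lemma eventually_list {α : Type*} (L : List α) (p : α → ℕ → Prop)
    (h : ∀ q ∈ L, ∀ᶠ n in atTop, p q n) : ∀ᶠ n in atTop, ∀ q ∈ L, p q n := by
  induction L with
  | nil =>
    filter_upwards with n
    simp
  | cons a L ih =>
    have h1 := h a List.mem_cons_self
    have h2 := ih (fun q hq => h q (List.mem_cons_of_mem _ hq))
    filter_upwards [h1, h2] with n hn1 hn2
    intro q hq
    rcases List.mem_cons.mp hq with rfl | hq
    exacts [hn1, hn2 q hq]

end Aux6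
section Aux7

variable {X : Type u} [MetricSpace X]

lemma e_apply_inv (e : X ≃ᵢ X) (x : X) : e (e⁻¹ x) = x := by
  rw [← IsometryEquiv.mul_apply, mul_inv_cancel]
  rfl

end Aux7
/-- If `f` is a hyperbolic isometry of a `δ`-hyperbolic space with
attracting/repelling fixed points `A₊`, `A₋`, and `U₊`, `U₋` are disjoint
neighborhoods of `A₊`, `A₋` in `X̄`, then there is `M ≥ 1` such that for every
`m ≥ M` and every isometry `g` with `g U₊ ∩ U₋ = ∅`, the isometry `f^m g` is
hyperbolic. -/
theorem hyperbolic_of_power_comp (δ : ℝ) (hX : IsDeltaHyperbolic X δ) (w : X)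
    (f : X ≃ᵢ X) (hf : IsHyperbolicIsometry f)
    (Aplus Aminus : GromovBoundary w)
    (hAp : IsAttractingFixedPt w f Aplus) (hAm : IsRepellingFixedPt w f Aminus)
    (Uplus Uminus : Set (GromovClosure w))
    (hUp : IsNeighborhood w Uplus (Sum.inr Aplus))
    (hUm : IsNeighborhood w Uminus (Sum.inr Aminus))
    (hdisj : Uplus ∩ Uminus = ∅) :
    ∃ M : ℕ, 1 ≤ M ∧ ∀ m : ℕ, M ≤ m → ∀ g : X ≃ᵢ X,
      (closureMap w g '' Uplus) ∩ Uminus = ∅ →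
      IsHyperbolicIsometry (f ^ m * g) := by
  obtain ⟨xp, cvgp, hbp⟩ := hAp
  obtain ⟨xm, cvgm, hbm⟩ := hAm
  have hg := hX.gromov
  have hδ0 := hX.delta_nonneg
  set vp : ℕ → X := fun n => (f ^ (n : ℤ)) xp with hvp
  set vm : ℕ → X := fun n => (f⁻¹ ^ (n : ℤ)) xm with hvm
  set wm : ℕ → X := fun n => (f⁻¹ ^ (n : ℤ)) w with hwm
  have Jpp : JB w vp vp := convergesToInfinity_iff_JB.mp cvgp
  have Jmm : JB w vm vm := convergesToInfinity_iff_JB.mp cvgm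
  have hwmclose : ∀ n : ℕ, dist (vm n) (wm n) ≤ dist xm w :=
    fun n => le_of_eq ((f⁻¹ ^ (n : ℤ)).dist_eq xm w)
  have hselfclose : ∀ n : ℕ, dist (vm n) (vm n) ≤ dist xm w := by
    intro n; rw [dist_self]; exact dist_nonneg
  have Jwmwm : JB w wm wm := Jmm.of_close hwmclose hwmclose
  have Jwmvm : JB w wm vm := Jmm.of_close hwmclose hselfclose
  have cvgwm : ConvergesToInfinity w wm := convergesToInfinity_iff_JB.mpr Jwmwm
  have bwm : boundaryPt w ⟨wm, cvgwm⟩ = Aminus :=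
    (boundaryPt_eq_of_seqEquiv (u := ⟨wm, cvgwm⟩) (v := ⟨vm, cvgm⟩)
      (seqEquiv_iff_JB.mpr Jwmvm)).trans hbm
  -- extract finite basic data from the neighborhoods
  obtain ⟨Lp, hLp1, hLp2⟩ := neighborhood_extract hUp
  obtain ⟨Lm, hLm1, hLm2⟩ := neighborhood_extract hUm
  -- tails of representatives lie in the neighborhoods
  have hTp : ∀ᶠ n in atTop, ∀ q ∈ Lp, q.2 < boundaryGP w q.1 (Sum.inl (vp n)) :=
    eventually_list Lp _ (fun q hq =>
      tail_mem hg q.1 Aplus ⟨vp, cvgp⟩ hbp (le_of_lt (hLp1 q hq).1) (hLp1 q hq).2)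
  have hTm : ∀ᶠ n in atTop, ∀ q ∈ Lm, q.2 < boundaryGP w q.1 (Sum.inl (wm n)) :=
    eventually_list Lm _ (fun q hq =>
      tail_mem hg q.1 Aminus ⟨wm, cvgwm⟩ bwm (le_of_lt (hLm1 q hq).1) (hLm1 q hq).2)
  obtain ⟨Np, hNp⟩ := eventually_atTop.mp hTp
  obtain ⟨Nm, hNm⟩ := eventually_atTop.mp hTm
  have memUp : ∀ n, Np ≤ n → Sum.inl (vp n) ∈ Uplus := fun n hn => hLp2 _ (hNp n hn)
  have memUm : ∀ n, Nm ≤ n → Sum.inl (wm n) ∈ Uminus := fun n hn => hLm2 _ (hNm n hn)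
  -- suppose the conclusion fails
  by_contra hcon
  push_neg at hcon
  have hsel : ∀ s : ℕ, ∃ m, Nm + s + 1 ≤ m ∧ ∃ g : X ≃ᵢ X,
      (closureMap w g '' Uplus) ∩ Uminus = ∅ ∧ ¬IsHyperbolicIsometry (f ^ m * g) :=
    fun s => hcon (Nm + s + 1) (by omega)
  choose m hm g hadm hnh using hsel
  have hmge : ∀ s, s ≤ m s := fun s => by have := hm s; omega
  have hmNm : ∀ s, Nm ≤ m s := fun s => by have := hm s; omega
  -- admissibility consequences
  have hadm' : ∀ s y, y ∈ Uplus → closureMap w (g s) y ∉ Uminus := by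
    intro s y hy hmem
    exact Set.eq_empty_iff_forall_notMem.mp (hadm s) _ ⟨Set.mem_image_of_mem _ hy, hmem⟩
  have adm1 : ∀ s, Sum.inl ((g s) (vp Np)) ∉ Uminus := by
    intro s
    have h1 := hadm' s _ (memUp Np le_rfl)
    exact h1
  have hpowinv : ∀ n : ℕ, (f ^ n)⁻¹ w = wm n := by
    intro n
    show _ = (f⁻¹ ^ (n : ℤ)) w
    rw [zpow_natCast, inv_pow]
  have adm2 : ∀ s, Sum.inl ((g s)⁻¹ (wm (m s))) ∉ Uplus := by
    intro s hmem
    have h1 := hadm' s _ hmem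
    apply h1
    have e2 : (g s) ((g s)⁻¹ (wm (m s))) = wm (m s) := e_apply_inv _ _
    show Sum.inl ((g s) ((g s)⁻¹ (wm (m s)))) ∈ Uminus
    rw [e2]
    exact memUm (m s) (hmNm s)
  -- badness of each f^(m s) * g s
  have hbad : ∀ s, dist ((f ^ m s * g s) ((f ^ m s * g s) w)) w
      < dist ((f ^ m s * g s) w) w + 2 * δ + 1 := by
    intro s
    by_contra hc
    push_neg at hc
    exact hnh s (criterion hδ0 hg _ w hc)
  -- basic distance identities
  have dFw : ∀ n : ℕ, dist ((f ^ n) w) w = dist w (wm n) := by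
    intro n
    calc dist ((f ^ n) w) w = dist ((f ^ n) w) ((f ^ n) ((f ^ n)⁻¹ w)) := by
          rw [e_apply_inv]
      _ = dist w ((f ^ n)⁻¹ w) := (f ^ n).dist_eq _ _
      _ = dist w (wm n) := by rw [hpowinv]
  have eL : ∀ s, dist ((f ^ m s * g s) w) w = dist ((g s) w) (wm (m s)) := by
    intro s
    have h0 : (f ^ m s * g s) w = (f ^ m s) ((g s) w) := rfl
    rw [h0]
    calc dist ((f ^ m s) ((g s) w)) w
        = dist ((f ^ m s) ((g s) w)) ((f ^ m s) ((f ^ m s)⁻¹ w)) := by rw [e_apply_inv]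
      _ = dist ((g s) w) ((f ^ m s)⁻¹ w) := (f ^ m s).dist_eq _ _
      _ = dist ((g s) w) (wm (m s)) := by rw [hpowinv]
  -- growth of dist w (wm n)
  have hMm : ∀ C : ℝ, ∃ N, ∀ n, N ≤ n → C ≤ dist w (wm n) := by
    intro C
    obtain ⟨N, hN⟩ := Jwmwm C
    refine ⟨N, fun n hn => ?_⟩
    have := hN n hn n hn
    rw [gp_self] at this
    rw [dist_comm]
    exact this
  set β : ℕ → ℝ := fun s => gromovProduct w ((g s) w) (wm (m s)) with hβ
  by_cases hB : ∃ B : ℝ, ∃ᶠ s in atTop, β s ≤ B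
  · -- CASE B : a subsequence along which g s does not push w towards A₋
    obtain ⟨B, hfreq⟩ := hB
    obtain ⟨φ, hφmono, hφB⟩ := Filter.extraction_of_frequently_atTop hfreq
    set y : ℕ → X := fun r => ((f ^ m (φ r) * g (φ r))⁻¹) w with hy
    have ynotU : ∀ r, Sum.inl (y r) ∉ Uplus := by
      intro r
      have hid : y r = (g (φ r))⁻¹ (wm (m (φ r))) := by
        show ((f ^ m (φ r) * g (φ r))⁻¹) w = _
        rw [mul_inv_rev, ← hpowinv]
        rfl
      rw [hid]
      exact adm2 (φ r)
    -- joint bigness of y with vp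
    have hclose : ∀ n : ℕ, dist (vp n) ((f ^ n) w) ≤ dist xp w := by
      intro n
      show dist ((f ^ (n : ℤ)) xp) _ ≤ _
      rw [zpow_natCast]
      exact le_of_eq ((f ^ n).dist_eq xp w)
    have JBy : JB w y vp := by
      intro C
      set dxp := dist xp w with hdxp
      have hdxp0 : 0 ≤ dxp := dist_nonneg
      obtain ⟨N1, hN1⟩ := hMm (max (C + 3 * δ + B + 1) (2 * (C + 2 * δ) + 2 * B + 6 * δ + 2))
      obtain ⟨N2, hN2⟩ := Jpp (C + δ + δ + dxp)
      refine ⟨max N1 N2, fun r hr j hj => ?_⟩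
      have hrN1 : N1 ≤ φ r := le_trans (le_trans (le_max_left _ _) hr) hφmono.le_apply
      have hrN2 : N2 ≤ m (φ r) :=
        le_trans (le_trans (le_max_right _ _) hr) (le_trans hφmono.le_apply (hmge (φ r)))
      have hMmr := hN1 (m (φ r)) (le_trans hrN1 (hmge (φ r)))
      -- abbreviations
      set mm := m (φ r) with hmm
      set gg := g (φ r) with hgg
      set H := f ^ mm * gg with hH
      set Mm := dist w (wm mm) with hMmdef
      -- (a) orbit point close to vp direction
      have ha : C + δ + δ ≤ gromovProduct w ((f ^ mm) w) (vp j) := by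
        have h1 := hN2 mm hrN2 j (le_trans (le_max_right _ _) hj)
        have h2 := gp_lipschitz_left w (vp mm) ((f ^ mm) w) (vp j)
        have h3 := hclose mm
        linarith
      -- badness gives the Gromov product bound
      have hbadr := hbad (φ r)
      have einv : H (H⁻¹ w) = w := e_apply_inv _ _
      have e1 : dist (H w) (H⁻¹ w) = dist (H (H w)) w := by
        calc dist (H w) (H⁻¹ w) = dist (H (H w)) (H (H⁻¹ w)) := (H.dist_eq _ _).symm
          _ = dist (H (H w)) w := by rw [einv]
      have e2 : dist (H⁻¹ w) w = dist (H w) w := by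
        calc dist (H⁻¹ w) w = dist (H (H⁻¹ w)) (H w) := (H.dist_eq _ _).symm
          _ = dist w (H w) := by rw [einv]
          _ = dist (H w) w := dist_comm _ _
      set L := dist (H w) w with hL
      -- L = Dg + Mm - 2 β (φ r)
      have hLeq : dist (H w) w = dist (gg w) (wm mm) := eL (φ r)
      have hDg0 : 0 ≤ dist (gg w) w := dist_nonneg
      have hβB : (dist (gg w) w + dist w (wm mm)
          - dist (gg w) (wm mm)) / 2 ≤ B := hφB r
      have hLlow : Mm - 2 * B ≤ L := by
        rw [hL, hLeq, hMmdef]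
        linarith
      -- P = gp w (H w) (H⁻¹ w) is large
      have hPdef : gromovProduct w (H w) (H⁻¹ w)
          = (dist (H w) w + dist w (H⁻¹ w) - dist (H w) (H⁻¹ w)) / 2 := rfl
      have hP : C + δ + δ + δ ≤ gromovProduct w (H w) (H⁻¹ w) := by
        have hMbig : 2 * (C + 2 * δ) + 2 * B + 6 * δ + 2 ≤ Mm :=
          le_trans (le_max_right _ _) hMmr
        have hcomm : dist w (H⁻¹ w) = dist (H⁻¹ w) w := dist_comm _ _
        rw [hPdef, hcomm, e2, e1]
        linarith
      -- T = gp w (f^mm w) (H w) is large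
      have hT : C + δ + δ + δ ≤ gromovProduct w ((f ^ mm) w) (H w) := by
        have hTdef : gromovProduct w ((f ^ mm) w) (H w)
            = (dist ((f ^ mm) w) w + dist w (H w) - dist ((f ^ mm) w) (H w)) / 2 := rfl
        have d1 : dist ((f ^ mm) w) w = Mm := dFw mm
        have d2 : dist ((f ^ mm) w) (H w) = dist (gg w) w := by
          have h0 : H w = (f ^ mm) (gg w) := rfl
          rw [h0, (f ^ mm).dist_eq, dist_comm]
        have d3 : dist w (H w) = L := dist_comm w (H w)
        have hMbig : C + 3 * δ + B + 1 ≤ Mm := le_trans (le_max_left _ _) hMmr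
        rw [hTdef, d1, d2, d3]
        rw [hL, hLeq]
        linarith
      -- G = gp w (f^mm w) (H⁻¹ w) = gp w (f^mm w) (y r) is large
      have hGy : C + δ + δ ≤ gromovProduct w ((f ^ mm) w) (H⁻¹ w) :=
        gp_min_le hg w _ _ _ hT hP
      have hGy' : C + δ + δ ≤ gromovProduct w ((f ^ mm) w) (y r) := hGy
      -- combine via the mediator f^mm w
      have hyF : C + δ ≤ gromovProduct w (y r) ((f ^ mm) w) := by
        rw [gp_symm]
        linarith [hGy']
      exact gp_min_le hg w _ _ _ hyF (by linarith [ha] : C + δ ≤ gromovProduct w ((f ^ mm) w) (vp j))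
    have cvy : ConvergesToInfinity w y := convergesToInfinity_iff_JB.mpr (JBy.self_left hg)
    have bply : boundaryPt w ⟨y, cvy⟩ = Aplus :=
      (boundaryPt_eq_of_seqEquiv (u := ⟨y, cvy⟩) (v := ⟨vp, cvgp⟩)
        (seqEquiv_iff_JB.mpr JBy)).trans hbp
    have hTy : ∀ᶠ r in atTop, ∀ q ∈ Lp, q.2 < boundaryGP w q.1 (Sum.inl (y r)) :=
      eventually_list Lp _ (fun q hq =>
        tail_mem hg q.1 Aplus ⟨y, cvy⟩ bply (le_of_lt (hLp1 q hq).1) (hLp1 q hq).2)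
    obtain ⟨r0, hr0⟩ := eventually_atTop.mp hTy
    exact ynotU r0 (hLp2 _ (hr0 r0 le_rfl))
  · -- CASE A : g s pushes w towards A₋; then g s maps a point of U₊ into U₋
    push_neg at hB
    have htendβ : ∀ B : ℝ, ∃ N, ∀ s, N ≤ s → B ≤ β s := by
      intro B
      have h1 := hB B
      obtain ⟨N, hN⟩ := eventually_atTop.mp h1
      exact ⟨N, fun s hs => le_of_lt (hN s hs)⟩
    set z : ℕ → X := fun s => (g s) (vp Np) with hz
    have JBz : JB w z vm := by
      intro C
      set dv := dist (vp Np) w with hdv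
      have hdv0 : 0 ≤ dv := dist_nonneg
      obtain ⟨N1, hN1⟩ := htendβ (C + dv + δ + δ)
      obtain ⟨N2, hN2⟩ := Jwmvm (C + dv + δ + δ)
      refine ⟨max N1 N2, fun s hs j hj => ?_⟩
      have h1 : C + dv + δ + δ ≤ β s := hN1 s (le_trans (le_max_left _ _) hs)
      have h2 : C + dv + δ + δ ≤ gromovProduct w (wm (m s)) (vm j) :=
        hN2 (m s) (le_trans (le_trans (le_max_right _ _) hs) (hmge s)) j
          (le_trans (le_max_right _ _) hj)
      have h1' : (C + dv + δ) + δ ≤ gromovProduct w ((g s) w) (wm (m s)) := h1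
      have h2' : (C + dv + δ) + δ ≤ gromovProduct w (wm (m s)) (vm j) := by linarith
      have h3 : C + dv ≤ gromovProduct w ((g s) w) (vm j) := by
        have := gp_min_le hg w ((g s) w) (wm (m s)) (vm j) h1' h2'
        linarith
      have h4 := gp_lipschitz_left w ((g s) w) (z s) (vm j)
      have h5 : dist ((g s) w) (z s) = dv := by
        rw [hz, hdv]
        calc dist ((g s) w) ((g s) (vp Np)) = dist w (vp Np) := (g s).dist_eq _ _
          _ = dist (vp Np) w := dist_comm _ _
      rw [h5] at h4
      linarith
    have cvz : ConvergesToInfinity w z := convergesToInfinity_iff_JB.mpr (JBz.self_left hg)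
    have bplz : boundaryPt w ⟨z, cvz⟩ = Aminus :=
      (boundaryPt_eq_of_seqEquiv (u := ⟨z, cvz⟩) (v := ⟨vm, cvgm⟩)
        (seqEquiv_iff_JB.mpr JBz)).trans hbm
    have hTz : ∀ᶠ s in atTop, ∀ q ∈ Lm, q.2 < boundaryGP w q.1 (Sum.inl (z s)) :=
      eventually_list Lm _ (fun q hq =>
        tail_mem hg q.1 Aminus ⟨z, cvz⟩ bplz (le_of_lt (hLm1 q hq).1) (hLm1 q hq).2)
    obtain ⟨s0, hs0⟩ := eventually_atTop.mp hTz
    exact adm1 s0 (hLm2 _ (hs0 s0 le_rfl))
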